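/- (Second moment bound for the SGC gradient estimator.) Let g_1,…,g_m ∈ ℝ^ℓ be vectors with ‖g_i‖₂ ≤ C for all i, and define the random vector ĝ := Σ_{j=1}^n B_j · Σ_{i ∈ S_j} g_i/(d_i·(1−p)). Then E‖ĝ‖₂² ≤ m·C²·( p/((1−p)·d_min) + (m−1)·p/(n·(1−p)) + m ), where d_min := min_{i} d_i. -/

import Mathlib

open MeasureTheory ProbabilityTheory Finset

lemma count_sum {n m : ℕ} {M : Type*} [AddCommMonoid M] (S : Fin n → Finset (Fin m))
    (f : Fin m → M) :
    ∑ j, ∑ i ∈ S j, f i = ∑ i, (Finset.univ.filter (fun j => i ∈ S j)).card • f i := by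
  have h1 : ∀ j, ∑ i ∈ S j, f i = ∑ i : Fin m, if i ∈ S j then f i else 0 := by
    intro j
    rw [Finset.sum_ite_mem, Finset.univ_inter]
  simp_rw [h1]
  rw [Finset.sum_comm]
  congr 1; ext i
  rw [← Finset.sum_filter, Finset.sum_const]

lemma count_sum2 {n m : ℕ} {M : Type*} [AddCommMonoid M] (S : Fin n → Finset (Fin m))
    (F : Fin m → Fin m → M) :
    ∑ j, ∑ i ∈ S j, ∑ i' ∈ S j, F i i'
      = ∑ i, ∑ i', (Finset.univ.filter (fun j => i ∈ S j ∧ i' ∈ S j)).card • F i i' := by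
  have h1 : ∀ j, ∑ i ∈ S j, ∑ i' ∈ S j, F i i'
      = ∑ i : Fin m, ∑ i' : Fin m, if i ∈ S j ∧ i' ∈ S j then F i i' else 0 := by
    intro j
    rw [show (∑ i ∈ S j, ∑ i' ∈ S j, F i i')
        = ∑ i : Fin m, if i ∈ S j then (∑ i' ∈ S j, F i i') else 0 by
      rw [Finset.sum_ite_mem, Finset.univ_inter]]
    refine Finset.sum_congr rfl fun i _ => ?_
    split_ifs with h
    · simp only [h, true_and]
      rw [Finset.sum_ite_mem, Finset.univ_inter]
    · simp [h]
  simp_rw [h1]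
  rw [Finset.sum_comm]
  refine Finset.sum_congr rfl fun i _ => ?_
  rw [Finset.sum_comm]
  refine Finset.sum_congr rfl fun i' _ => ?_
  rw [← Finset.sum_filter, Finset.sum_const]

lemma alg1 (dd q X : ℝ) (hd : dd ≠ 0) (hq : q ≠ 0) :
    dd * ((dd * q)⁻¹ * ((dd * q)⁻¹ * X)) = X / (dd * q ^ 2) := by
  field_simp

lemma alg2 (d1 d2 nn q X : ℝ) (h1 : d1 ≠ 0) (h2 : d2 ≠ 0) (hn : nn ≠ 0) (hq : q ≠ 0) :
    d1 * d2 / nn * ((d1 * q)⁻¹ * ((d2 * q)⁻¹ * X)) = X / (nn * q ^ 2) := by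
  field_simp

theorem sgc_second_moment_bound
    (m n l : ℕ) (hn : 1 ≤ n) (hm : 0 < m)
    (S : Fin n → Finset (Fin m)) (d : Fin m → ℕ) (hdpos : ∀ i, 0 < d i)
    (hdeg : ∀ i : Fin m, (Finset.univ.filter (fun j => i ∈ S j)).card = d i)
    (hpair : ∀ i i' : Fin m, i ≠ i' →
      (Finset.univ.filter (fun j => i ∈ S j ∧ i' ∈ S j)).card * n = d i * d i')
    (p : ℝ) (hp0 : 0 ≤ p) (hp1 : p < 1)
    (Ω : Type*) [MeasureSpace Ω] [IsProbabilityMeasure (ℙ : Measure Ω)]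
    (B : Fin n → Ω → ℝ)
    (hB01 : ∀ j ω, B j ω = 0 ∨ B j ω = 1)
    (hBmeas : ∀ j, Measurable (B j))
    (hBp : ∀ j, (ℙ : Measure Ω) {ω | B j ω = 1} = ENNReal.ofReal (1 - p))
    (hBindep : iIndepFun B ℙ)
    (C : ℝ) (g : Fin m → EuclideanSpace ℝ (Fin l))
    (hg : ∀ i, ‖g i‖ ≤ C)
    (ghat : Ω → EuclideanSpace ℝ (Fin l))
    (hghat : ∀ ω, ghat ω = ∑ j, B j ω • ∑ i ∈ S j, ((d i : ℝ) * (1 - p))⁻¹ • g i)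
    (dmin : ℝ)
    (hdmin : dmin = Finset.univ.inf' ⟨⟨0, hm⟩, Finset.mem_univ _⟩ (fun i : Fin m => (d i : ℝ))) :
    ∫ ω, ‖ghat ω‖ ^ 2 ≤
      m * C ^ 2 * (p / ((1 - p) * dmin) + (m - 1) * p / (n * (1 - p)) + m) := by
  have hq : (0:ℝ) < 1 - p := by linarith
  have hq0 : (1:ℝ) - p ≠ 0 := ne_of_gt hq
  have hC0 : 0 ≤ C := le_trans (norm_nonneg _) (hg ⟨0, hm⟩)
  have hdmin_le : ∀ i, dmin ≤ (d i : ℝ) := fun i => hdmin ▸ Finset.inf'_le _ (Finset.mem_univ i)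
  have hdmin_pos : (0:ℝ) < dmin := by
    rw [hdmin]
    refine lt_of_lt_of_le zero_lt_one (Finset.le_inf' _ _ fun i _ => ?_)
    exact_mod_cast hdpos i
  have hnpos : (0:ℝ) < n := by exact_mod_cast hn
  have hd0 : ∀ i, ((d i : ℝ)) ≠ 0 := fun i => by
    exact_mod_cast (hdpos i).ne'
  set v : Fin n → EuclideanSpace ℝ (Fin l) :=
    fun j => ∑ i ∈ S j, ((d i : ℝ) * (1 - p))⁻¹ • g i with hv
  -- pointwise expansion
  have hnorm : ∀ ω, ‖ghat ω‖ ^ 2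
      = ∑ j, ∑ k, (B j ω * B k ω) * (inner ℝ (v j) (v k) : ℝ) := by
    intro ω
    rw [hghat ω, ← real_inner_self_eq_norm_sq, sum_inner]
    refine Finset.sum_congr rfl fun j _ => ?_
    rw [inner_sum]
    refine Finset.sum_congr rfl fun k _ => ?_
    rw [real_inner_smul_left, real_inner_smul_right]
    ring
  -- integrability of B j * B k
  have hBiK : ∀ j k : Fin n, Integrable (fun ω => B j ω * B k ω) ℙ := by
    intro j k
    refine Integrable.mono' (integrable_const 1)
      (((hBmeas j).mul (hBmeas k)).aestronglyMeasurable) ?_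
    filter_upwards with ω
    rcases hB01 j ω with h | h <;> rcases hB01 k ω with h' | h' <;> simp [h, h']
  -- mean of B j
  have hEB : ∀ j, ∫ ω, B j ω = 1 - p := by
    intro j
    have hset : MeasurableSet {ω | B j ω = 1} := hBmeas j (measurableSet_singleton 1)
    have heq : (fun ω => B j ω) = Set.indicator {ω | B j ω = 1} (fun _ => (1:ℝ)) := by
      funext ω
      rcases hB01 j ω with h | h
      · have hmem : ω ∉ {ω | B j ω = 1} := by simp [Set.mem_setOf_eq, h]
        rw [Set.indicator_of_notMem hmem, h]
      · have hmem : ω ∈ {ω | B j ω = 1} := h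
        rw [Set.indicator_of_mem hmem]
        exact h
    rw [heq, integral_indicator hset, setIntegral_const, measureReal_def, hBp j,
      ENNReal.toReal_ofReal (by linarith), smul_eq_mul, mul_one]
  have hEBB : ∀ j k : Fin n, ∫ ω, B j ω * B k ω = if j = k then 1 - p else (1 - p) ^ 2 := by
    intro j k
    by_cases h : j = k
    · subst h
      rw [if_pos rfl]
      have h2 : ∫ ω, B j ω * B j ω = ∫ ω, B j ω :=
        integral_congr_ae (Filter.Eventually.of_forall fun ω => by
          rcases hB01 j ω with h | h <;> simp [h])
      rw [h2, hEB]
    · rw [if_neg h]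
      have h3 := (hBindep.indepFun h).integral_fun_mul_eq_mul_integral (hBmeas j).aestronglyMeasurable
        (hBmeas k).aestronglyMeasurable
      calc ∫ ω, B j ω * B k ω = (∫ ω, B j ω) * ∫ ω, B k ω := h3
        _ = (1 - p) ^ 2 := by rw [hEB, hEB]; ring
  -- integral expansion
  have hint : ∫ ω, ‖ghat ω‖ ^ 2
      = ∑ j, ∑ k, (∫ ω, B j ω * B k ω) * (inner ℝ (v j) (v k) : ℝ) := by
    calc ∫ ω, ‖ghat ω‖ ^ 2
        = ∫ ω, ∑ j, ∑ k, (B j ω * B k ω) * (inner ℝ (v j) (v k) : ℝ) :=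
          integral_congr_ae (Filter.Eventually.of_forall fun ω => hnorm ω)
      _ = ∑ j, ∫ ω, ∑ k, (B j ω * B k ω) * (inner ℝ (v j) (v k) : ℝ) :=
          integral_finset_sum _ (fun j _ =>
            integrable_finset_sum _ (fun k _ => (hBiK j k).mul_const _))
      _ = ∑ j, ∑ k, ∫ ω, (B j ω * B k ω) * (inner ℝ (v j) (v k) : ℝ) :=
          Finset.sum_congr rfl fun j _ =>
            integral_finset_sum _ (fun k _ => (hBiK j k).mul_const _)
      _ = ∑ j, ∑ k, (∫ ω, B j ω * B k ω) * (inner ℝ (v j) (v k) : ℝ) :=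
          Finset.sum_congr rfl fun j _ => Finset.sum_congr rfl fun k _ =>
            integral_mul_const _ _
  simp_rw [hEBB] at hint
  -- split into diagonal and full sum
  have hsplit : ∫ ω, ‖ghat ω‖ ^ 2
      = (1 - p) ^ 2 * (∑ j, ∑ k, (inner ℝ (v j) (v k) : ℝ))
        + p * (1 - p) * ∑ j, (inner ℝ (v j) (v j) : ℝ) := by
    rw [hint]
    have hjk : ∀ j k : Fin n,
        (if j = k then 1 - p else (1 - p) ^ 2) * (inner ℝ (v j) (v k) : ℝ)
          = (1 - p) ^ 2 * (inner ℝ (v j) (v k) : ℝ)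
            + (if j = k then p * (1 - p) * (inner ℝ (v j) (v k) : ℝ) else 0) := by
      intro j k
      split_ifs with h
      · ring
      · ring
    simp_rw [hjk, Finset.sum_add_distrib, Finset.sum_ite_eq, Finset.mem_univ, if_true,
      ← Finset.mul_sum]
  -- total sum term
  have hVsum : ∑ j, v j = (1 - p)⁻¹ • ∑ i, g i := by
    rw [hv, count_sum S (fun i => ((d i : ℝ) * (1 - p))⁻¹ • g i), Finset.smul_sum]
    refine Finset.sum_congr rfl fun i _ => ?_
    rw [hdeg i, ← Nat.cast_smul_eq_nsmul ℝ, smul_smul]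
    congr 1
    rw [mul_inv, ← mul_assoc, mul_inv_cancel₀ (hd0 i), one_mul]
  -- full double sum of inner products
  have hfull : ∑ j, ∑ k, (inner ℝ (v j) (v k) : ℝ) = ‖∑ i, g i‖ ^ 2 * ((1 - p)⁻¹) ^ 2 := by
    have h1 : (inner ℝ (∑ j, v j) (∑ k, v k) : ℝ) = ∑ j, ∑ k, (inner ℝ (v j) (v k) : ℝ) := by
      rw [sum_inner]
      exact Finset.sum_congr rfl fun j _ => inner_sum _ _ _
    rw [← h1, hVsum, real_inner_smul_left, real_inner_smul_right,
      real_inner_self_eq_norm_sq]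
    ring
  -- pointwise inner product bound
  have hinner_le : ∀ i i' : Fin m, (inner ℝ (g i) (g i') : ℝ) ≤ C ^ 2 := by
    intro i i'
    calc (inner ℝ (g i) (g i') : ℝ) ≤ ‖g i‖ * ‖g i'‖ := real_inner_le_norm _ _
      _ ≤ C * C := mul_le_mul (hg i) (hg i') (norm_nonneg _) hC0
      _ = C ^ 2 := (sq C).symm
  -- diagonal sum bound
  have hNdiag : ∀ i : Fin m, (Finset.univ.filter (fun j => i ∈ S j ∧ i ∈ S j)).card = d i := by
    intro i
    rw [← hdeg i]
    congr 1
    ext j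
    simp [and_self]
  have hform : ∀ A Bc : ℝ, ∑ i : Fin m, ∑ i' : Fin m, (if i = i' then A else Bc)
      = m * A + m * ((m : ℝ) - 1) * Bc := by
    intro A Bc
    have h1 : ∀ i : Fin m, ∑ i' : Fin m, (if i = i' then A else Bc) = Bc * m + (A - Bc) := by
      intro i
      have h2 : ∀ i' : Fin m, (if i = i' then A else Bc)
          = Bc + (if i = i' then A - Bc else 0) := by
        intro i'; split_ifs <;> ring
      simp_rw [h2, Finset.sum_add_distrib, Finset.sum_const, Finset.sum_ite_eq,
        Finset.mem_univ, if_true, Finset.card_univ, Fintype.card_fin, nsmul_eq_mul]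
      ring
    simp_rw [h1, Finset.sum_add_distrib, Finset.sum_const, Finset.card_univ,
      Fintype.card_fin, nsmul_eq_mul]
    ring
  have hVV : ∑ j, (inner ℝ (v j) (v j) : ℝ)
      ≤ m * (C ^ 2 / (dmin * (1 - p) ^ 2)) + m * ((m : ℝ) - 1) * (C ^ 2 / (n * (1 - p) ^ 2)) := by
    have hexp : ∑ j, (inner ℝ (v j) (v j) : ℝ)
        = ∑ i, ∑ i', ((Finset.univ.filter (fun j => i ∈ S j ∧ i' ∈ S j)).card : ℝ)
            * (((d i : ℝ) * (1 - p))⁻¹ * (((d i' : ℝ) * (1 - p))⁻¹ * inner ℝ (g i) (g i'))) := by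
      have h1 : ∀ j, (inner ℝ (v j) (v j) : ℝ)
          = ∑ i ∈ S j, ∑ i' ∈ S j,
              ((d i : ℝ) * (1 - p))⁻¹ * (((d i' : ℝ) * (1 - p))⁻¹ * inner ℝ (g i) (g i')) := by
        intro j
        simp only [hv]
        rw [sum_inner]
        refine Finset.sum_congr rfl fun i _ => ?_
        rw [real_inner_smul_left, inner_sum, Finset.mul_sum]
        exact Finset.sum_congr rfl fun i' _ => by rw [real_inner_smul_right]
      simp_rw [h1]
      rw [count_sum2 S (fun i i' =>
        ((d i : ℝ) * (1 - p))⁻¹ * (((d i' : ℝ) * (1 - p))⁻¹ * inner ℝ (g i) (g i')))]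
      simp_rw [nsmul_eq_mul]
    rw [hexp]
    have hbound : ∀ i i' : Fin m,
        ((Finset.univ.filter (fun j => i ∈ S j ∧ i' ∈ S j)).card : ℝ)
            * (((d i : ℝ) * (1 - p))⁻¹ * (((d i' : ℝ) * (1 - p))⁻¹ * inner ℝ (g i) (g i')))
          ≤ if i = i' then C ^ 2 / (dmin * (1 - p) ^ 2) else C ^ 2 / (n * (1 - p) ^ 2) := by
      intro i i'
      by_cases h : i = i'
      · subst h
        rw [if_pos rfl, hNdiag i]
        have heq : (d i : ℝ)
              * (((d i : ℝ) * (1 - p))⁻¹ * (((d i : ℝ) * (1 - p))⁻¹ * inner ℝ (g i) (g i)))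
            = (inner ℝ (g i) (g i) : ℝ) / ((d i : ℝ) * (1 - p) ^ 2) :=
          alg1 _ _ _ (hd0 i) hq0
        rw [heq]
        refine div_le_div₀ (by positivity) ?_ (by positivity) ?_
        · rw [real_inner_self_eq_norm_sq]
          exact pow_le_pow_left₀ (norm_nonneg _) (hg i) 2
        · exact mul_le_mul_of_nonneg_right (hdmin_le i) (by positivity)
      · rw [if_neg h]
        have hN : ((Finset.univ.filter (fun j => i ∈ S j ∧ i' ∈ S j)).card : ℝ) * n
            = (d i : ℝ) * d i' := by exact_mod_cast hpair i i' h
        have hNval : ((Finset.univ.filter (fun j => i ∈ S j ∧ i' ∈ S j)).card : ℝ)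
            = (d i : ℝ) * d i' / n := by
          rw [eq_div_iff hnpos.ne']
          exact hN
        rw [hNval]
        have heq : (d i : ℝ) * d i' / n
              * (((d i : ℝ) * (1 - p))⁻¹ * (((d i' : ℝ) * (1 - p))⁻¹ * inner ℝ (g i) (g i')))
            = (inner ℝ (g i) (g i') : ℝ) / (n * (1 - p) ^ 2) :=
          alg2 _ _ _ _ _ (hd0 i) (hd0 i') hnpos.ne' hq0
        rw [heq]
        exact (div_le_div_iff_of_pos_right (by positivity)).mpr (hinner_le i i')
    calc ∑ i : Fin m, ∑ i', ((Finset.univ.filter (fun j => i ∈ S j ∧ i' ∈ S j)).card : ℝ)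
            * (((d i : ℝ) * (1 - p))⁻¹ * (((d i' : ℝ) * (1 - p))⁻¹ * inner ℝ (g i) (g i')))
        ≤ ∑ i : Fin m, ∑ i' : Fin m,
            (if i = i' then C ^ 2 / (dmin * (1 - p) ^ 2) else C ^ 2 / (n * (1 - p) ^ 2)) :=
          Finset.sum_le_sum fun i _ => Finset.sum_le_sum fun i' _ => hbound i i'
      _ = m * (C ^ 2 / (dmin * (1 - p) ^ 2)) + m * ((m : ℝ) - 1) * (C ^ 2 / (n * (1 - p) ^ 2)) :=
          hform _ _
  -- final assembly
  rw [hsplit]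
  have hgs : ‖∑ i, g i‖ ≤ m * C := by
    calc ‖∑ i, g i‖ ≤ ∑ i, ‖g i‖ := norm_sum_le _ _
      _ ≤ ∑ _i : Fin m, C := Finset.sum_le_sum fun i _ => hg i
      _ = m * C := by rw [Finset.sum_const, Finset.card_univ, Fintype.card_fin, nsmul_eq_mul]
  have t1 : (1 - p) ^ 2 * (∑ j, ∑ k, (inner ℝ (v j) (v k) : ℝ)) ≤ (m * C) ^ 2 := by
    rw [hfull]
    have heq : (1 - p) ^ 2 * (‖∑ i, g i‖ ^ 2 * ((1 - p)⁻¹) ^ 2) = ‖∑ i, g i‖ ^ 2 := by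
      field_simp
    rw [heq]
    exact pow_le_pow_left₀ (norm_nonneg _) hgs 2
  have t2 : p * (1 - p) * ∑ j, (inner ℝ (v j) (v j) : ℝ)
      ≤ p * (1 - p) * (m * (C ^ 2 / (dmin * (1 - p) ^ 2))
          + m * ((m : ℝ) - 1) * (C ^ 2 / (n * (1 - p) ^ 2))) :=
    mul_le_mul_of_nonneg_left hVV (by positivity)
  have hfin : (m * C) ^ 2 + p * (1 - p) * (m * (C ^ 2 / (dmin * (1 - p) ^ 2))
        + m * ((m : ℝ) - 1) * (C ^ 2 / (n * (1 - p) ^ 2)))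
      = m * C ^ 2 * (p / ((1 - p) * dmin) + ((m : ℝ) - 1) * p / (n * (1 - p)) + m) := by
    field_simp
    ring
  linarith [t1, t2]
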